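/- Let φ ∈ V be an articulation point of G, i.e., removing φ disconnects G into connected components G_1, …, G_p with vertex sets V_1, …, V_p, and let G_i be a component containing no terminal vertex. Then in every minimum multiterminal cut partition of G, all vertices of V_i ∪ {φ} lie in the same block; equivalently, no edge with both endpoints in V_i ∪ {φ} belongs to a minimum multiterminal cut. -/

import Mathlib

/-- The weight of the multiterminal cut induced by a partition `c` of the
vertices into `k` blocks: the total weight of (unordered) edges whose
endpoints lie in different blocks. -/
def mtcWeight {V : Type*} [Fintype V] [DecidableEq V] {k : ℕ}
    (w : Sym2 V → ℕ) (c : V → Fin k) : ℕ :=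
  ∑ p ∈ Finset.univ.sym2, if (Sym2.map c p).IsDiag then 0 else w p

/-- The minimum multiterminal cut weight `𝒲(G)` for terminals `t`. -/
noncomputable def minMTC {V : Type*} [Fintype V] [DecidableEq V] {k : ℕ}
    (w : Sym2 V → ℕ) (t : Fin k → V) : ℕ :=
  sInf {n | ∃ c : V → Fin k, (∀ i, c (t i) = i) ∧ mtcWeight w c = n}

/-- The simple graph underlying the weight function `w`: vertices are adjacent
iff they are distinct and joined by an edge of positive weight. -/
def wGraph {V : Type*} (w : Sym2 V → ℕ) : SimpleGraph V where
  Adj u v := u ≠ v ∧ 0 < w s(u, v)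
  symm := by
    constructor
    intro a b h
    exact ⟨Ne.symm h.1, by rw [Sym2.eq_swap]; exact h.2⟩
  loopless := ⟨fun a h => h.1 rfl⟩

/-- let `φ` be an articulation point of the connected graph `G`,
i.e. removing `φ` disconnects `G`, and let `S` be the vertex set of a
connected component of `G - φ` (the set of vertices reachable from some
`x₀ ≠ φ` in the graph induced on `V \ {φ}`) containing no terminal. Then in
every minimum multiterminal cut partition of `G`, all vertices of `S ∪ {φ}`
lie in the same block. -/
theorem articulation_point_component_same_block
    {V : Type*} [Fintype V] [DecidableEq V] {k : ℕ} (hk : 2 ≤ k)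
    (w : Sym2 V → ℕ) (hloopless : ∀ x, w (Sym2.diag x) = 0)
    (t : Fin k → V) (ht : Function.Injective t)
    (hconn : (wGraph w).Connected)
    (φ : V)
    (hart : ¬ (SimpleGraph.induce {x : V | x ≠ φ} (wGraph w)).Connected)
    (x₀ : V) (hx₀ : x₀ ≠ φ)
    (S : Set V) (hφS : φ ∉ S)
    (hS : ∀ y : V, y ∈ S ↔ ∃ hy : y ≠ φ,
      (SimpleGraph.induce {x : V | x ≠ φ} (wGraph w)).Reachable ⟨y, hy⟩ ⟨x₀, hx₀⟩)
    (hST : ∀ i, t i ∉ S)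
    (c : V → Fin k) (hc : ∀ i, c (t i) = i)
    (hcmin : mtcWeight w c = minMTC w t) :
    ∀ x ∈ S, c x = c φ := by
  classical
  by_contra hcon
  push_neg at hcon
  obtain ⟨x, hxS, hxne⟩ := hcon
  -- Any neighbor of a vertex of `S` other than `φ` is in `S`.
  have closure : ∀ y ∈ S, ∀ z : V, z ≠ φ → (wGraph w).Adj y z → z ∈ S := by
    intro y hy z hz hadj
    rcases (hS y).1 hy with ⟨hyφ, hreach⟩
    have hadj' : (SimpleGraph.induce {x : V | x ≠ φ} (wGraph w)).Adj ⟨z, hz⟩ ⟨y, hyφ⟩ :=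
      hadj.symm
    exact (hS z).2 ⟨hz, hadj'.reachable.trans hreach⟩
  set c' : V → Fin k := fun v => if v ∈ S then c φ else c v with hc'def
  have hc'φ : c' φ = c φ := by simp [hc'def, hφS]
  have hc'S : ∀ v ∈ S, c' v = c φ := fun v hv => by simp [hc'def, hv]
  have hc'out : ∀ v, v ∉ S → c' v = c v := fun v hv => by simp [hc'def, hv]
  -- pointwise comparison of the two cut weights
  have hpt : ∀ p ∈ Finset.univ.sym2,
      (if (Sym2.map c' p).IsDiag then 0 else w p)
        ≤ (if (Sym2.map c p).IsDiag then 0 else w p) := by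
    intro p _
    induction p using Sym2.inductionOn with
    | hf a b =>
      by_cases hw : 0 < w s(a, b)
      · have hab : a ≠ b := by
          rintro rfl
          have h0 : w s(a, a) = 0 := hloopless a
          omega
        have hdiag : (Sym2.map c' s(a, b)).IsDiag ∨
            ((Sym2.map c' s(a, b)).IsDiag ↔ (Sym2.map c s(a, b)).IsDiag) := by
          by_cases haS : a ∈ S
          · left
            by_cases hbφ : b = φ
            · subst hbφ
              simp [Sym2.map_pair_eq, Sym2.mk_isDiag_iff, hc'S a haS, hc'φ]
            · have hbS : b ∈ S := closure a haS b hbφ ⟨hab, hw⟩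
              simp [Sym2.map_pair_eq, Sym2.mk_isDiag_iff, hc'S a haS, hc'S b hbS]
          · by_cases hbS : b ∈ S
            · left
              have haφ : a = φ := by
                by_contra haφ
                exact haS (closure b hbS a haφ ⟨Ne.symm hab, by rwa [Sym2.eq_swap]⟩)
              subst haφ
              simp [Sym2.map_pair_eq, Sym2.mk_isDiag_iff, hc'S b hbS, hc'φ]
            · right
              simp [Sym2.map_pair_eq, Sym2.mk_isDiag_iff, hc'out a haS, hc'out b hbS]
        rcases hdiag with hd | hd
        · rw [if_pos hd]
          exact Nat.zero_le _
        · rw [if_congr hd rfl rfl]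
      · have hw0 : w s(a, b) = 0 := by omega
        split <;> split <;> omega
  -- find a cut edge inside `S ∪ {φ}`
  have key : ∀ (y z : V), (wGraph w).Walk y z → z = φ → y ∈ S → c y ≠ c φ →
      ∃ u v, u ∈ S ∧ (v ∈ S ∨ v = φ) ∧ (wGraph w).Adj u v ∧ c u ≠ c v := by
    intro y z p
    induction p with
    | nil =>
      intro hzφ hy _
      exact absurd hy (by rw [hzφ]; exact hφS)
    | @cons y m z' h q ih =>
      intro hzφ hyS hyc
      by_cases hmφ : m = φ
      · exact ⟨y, φ, hyS, Or.inr rfl, hmφ ▸ h, hyc⟩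
      · have hmS : m ∈ S := closure y hyS m hmφ h
        by_cases hcm : c y = c m
        · exact ih hzφ hmS (fun hh => hyc (hcm.trans hh))
        · exact ⟨y, m, hyS, Or.inl hmS, h, hcm⟩
  obtain ⟨u, v, huS, hv, hadj, hcuv⟩ :=
    key x φ (hconn.preconnected x φ).some rfl hxS hxne
  have hc'u : c' u = c φ := hc'S u huS
  have hc'v : c' v = c φ := by
    rcases hv with hv | hv
    · exact hc'S v hv
    · rw [hv, hc'φ]
  have hstrict : mtcWeight w c' < mtcWeight w c := by
    apply Finset.sum_lt_sum hpt
    refine ⟨s(u, v), by simp [Finset.mem_sym2_iff], ?_⟩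
    have h1 : (Sym2.map c' s(u, v)).IsDiag := by
      simp [Sym2.map_pair_eq, Sym2.mk_isDiag_iff, hc'u, hc'v]
    have h2 : ¬ (Sym2.map c s(u, v)).IsDiag := by
      simp [Sym2.map_pair_eq, Sym2.mk_isDiag_iff, hcuv]
    rw [if_pos h1, if_neg h2]
    exact hadj.2
  have hc't : ∀ i, c' (t i) = i := fun i => by rw [hc'out _ (hST i), hc i]
  have hle : minMTC w t ≤ mtcWeight w c' :=
    Nat.sInf_le ⟨c', hc't, rfl⟩
  omega
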